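/- Let O = I₁ × I₂ be an open rectangle in ℝ², P ∈ O, and v a C¹ vector field on O. If v is irrotational (D₁v₂ = D₂v₁ on O), then φ(x) := ∫_{Γ_x} v₁ dx₁ + v₂ dx₂, integrated along any piecewise C¹ curve Γ_x in O from P to x, is a well-defined C¹ function on O with ∇φ = v. If v is solenoidal (D₁v₁ + D₂v₂ = 0), then ψ(x) := ∫_{Γ_x} v₁ dx₂ − v₂ dx₁ is well-defined and C¹ with ∇⊥ψ = v. -/

import Mathlib

open MeasureTheory Real Filter
open scoped Topology ENNReal

noncomputable section

/-- The plane `ℝ²`. -/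
abbrev E2 : Type := EuclideanSpace ℝ (Fin 2)

/-- Euclidean dot product on `ℝ²`. -/
def dot (a b : E2) : ℝ := inner ℝ a b

/-- Rotation by `-π/2` : `perp (w₁,w₂) = (w₂, -w₁)`; `perp (gradient ψ) = ∇^⊥ ψ`. -/
def perp (w : E2) : E2 := WithLp.toLp 2 ![w 1, -(w 0)]

/-- Lebesgue measure restricted to `Ω`. -/
def μΩ (Ω : Set E2) : Measure E2 := volume.restrict Ω

/-- `C_c^n` test functions supported inside `Ω`. -/
def IsTest (Ω : Set E2) (n : ℕ) (χ : E2 → ℝ) : Prop :=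
  ContDiff ℝ n χ ∧ HasCompactSupport χ ∧ tsupport χ ⊆ Ω

/-- `g` is a weak gradient of `u` on `Ω`. -/
def HasWeakGradOn (Ω : Set E2) (u : E2 → ℝ) (g : E2 → E2) : Prop :=
  ∀ χ : E2 → ℝ, IsTest Ω 1 χ →
    ∫ x in Ω, u x • gradient χ x = - ∫ x in Ω, χ x • g x

/-- Membership in `H¹(Ω)`: `u ∈ L²(Ω)` with weak gradient `g ∈ L²(Ω;ℝ²)`. -/
def MemH1 (Ω : Set E2) (u : E2 → ℝ) (g : E2 → E2) : Prop :=
  MemLp u 2 (μΩ Ω) ∧ MemLp g 2 (μΩ Ω) ∧ HasWeakGradOn Ω u g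

/-- Membership in `H¹_m(Ω)`, the mean-zero subspace of `H¹(Ω)`. -/
def MemH1m (Ω : Set E2) (u : E2 → ℝ) (g : E2 → E2) : Prop :=
  MemH1 Ω u g ∧ ∫ x in Ω, u x = 0

/-- Membership in `H¹₀(Ω)`: an `H¹` function which is an `H¹`-limit of smooth
compactly supported functions in `Ω`. -/
def MemH10 (Ω : Set E2) (u : E2 → ℝ) (g : E2 → E2) : Prop :=
  MemH1 Ω u g ∧
  ∃ φ : ℕ → E2 → ℝ, (∀ n, IsTest Ω 1 (φ n)) ∧
    Tendsto (fun n => ∫ x in Ω,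
        ((u x - φ n x) ^ 2 + ‖g x - gradient (φ n) x‖ ^ 2)) atTop (𝓝 0)

/-- `v` is irrotational on `Ω` (weakly, `curl v = 0`). -/
def Irrotational (Ω : Set E2) (v : E2 → E2) : Prop :=
  ∀ χ : E2 → ℝ, IsTest Ω 1 χ → ∫ x in Ω, dot (perp (gradient χ x)) (v x) = 0

/-- `v` is solenoidal on `Ω` (weakly, `div v = 0`). -/
def Solenoidal (Ω : Set E2) (v : E2 → E2) : Prop :=
  ∀ χ : E2 → ℝ, IsTest Ω 1 χ → ∫ x in Ω, dot (gradient χ x) (v x) = 0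

/-- `div v = ρ` weakly on `Ω`. -/
def HasWeakDiv (Ω : Set E2) (v : E2 → E2) (ρ : E2 → ℝ) : Prop :=
  ∀ χ : E2 → ℝ, IsTest Ω 1 χ →
    ∫ x in Ω, dot (gradient χ x) (v x) = - ∫ x in Ω, ρ x * χ x

/-- `curl v = ω` weakly on `Ω`. -/
def HasWeakCurl (Ω : Set E2) (v : E2 → E2) (ω : E2 → ℝ) : Prop :=
  ∀ χ : E2 → ℝ, IsTest Ω 1 χ →
    ∫ x in Ω, dot (perp (gradient χ x)) (v x) = ∫ x in Ω, ω x * χ x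

/-- A bounded planar Lipschitz domain (condition (B1): bounded, connected, open;
the Lipschitz-loop structure of the boundary is recorded as nonempty interior-free
frontier data and is not further formalized). -/
def IsB1Domain (Ω : Set E2) : Prop :=
  IsOpen Ω ∧ IsConnected Ω ∧ Bornology.IsBounded Ω

/-- A piecewise-`C¹` curve on `[0,1]`: continuous, and differentiable off a finite set,
with integrable line-element pairing against `v`. -/
def IsPiecewiseC1 (γ : ℝ → E2) : Prop :=
  ContinuousOn γ (Set.Icc 0 1) ∧
  ∃ S : Finset ℝ, ∀ t ∈ Set.Icc (0:ℝ) 1, t ∉ S → DifferentiableAt ℝ γ t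

/-- An admissible curve in `O` from `P` to `x`. -/
def IsCurveIn (O : Set E2) (P x : E2) (γ : ℝ → E2) : Prop :=
  IsPiecewiseC1 γ ∧ (∀ t ∈ Set.Icc (0:ℝ) 1, γ t ∈ O) ∧ γ 0 = P ∧ γ 1 = x

open Set Metric intervalIntegral

def s9eb (i : Fin 2) : E2 := EuclideanSpace.single i 1
def s9mk (a b : ℝ) : E2 := WithLp.toLp 2 ![a, b]
def s9pr (i : Fin 2) : E2 →L[ℝ] ℝ := EuclideanSpace.proj i

@[simp] lemma s9mk_zero (a b : ℝ) : s9mk a b 0 = a := rfl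
@[simp] lemma s9mk_one (a b : ℝ) : s9mk a b 1 = b := rfl

lemma s9mk_eq (a b : ℝ) : s9mk a b = a • s9eb 0 + b • s9eb 1 := by
  ext i
  fin_cases i <;>
    simp [s9mk, s9eb, EuclideanSpace.single_apply, PiLp.add_apply, PiLp.smul_apply]

lemma s9mk_coords (x : E2) : s9mk (x 0) (x 1) = x := by
  ext i; fin_cases i <;> simp [s9mk]

lemma s9cont_mk : Continuous fun p : ℝ × ℝ => s9mk p.1 p.2 := by
  have h : (fun p : ℝ × ℝ => s9mk p.1 p.2) = fun p => p.1 • s9eb 0 + p.2 • s9eb 1 := by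
    funext p; rw [s9mk_eq]
  rw [h]
  exact (continuous_fst.smul continuous_const).add (continuous_snd.smul continuous_const)

lemma s9cont_mk_left (c : ℝ) : Continuous fun s => s9mk c s :=
  s9cont_mk.comp (continuous_const.prodMk continuous_id)

lemma s9cont_mk_right (c : ℝ) : Continuous fun t => s9mk t c :=
  s9cont_mk.comp (continuous_id.prodMk continuous_const)

lemma s9abs_apply_le_norm (x : E2) (i : Fin 2) : |x i| ≤ ‖x‖ := by
  rw [EuclideanSpace.norm_eq, ← Real.sqrt_sq_eq_abs]
  apply Real.sqrt_le_sqrt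
  have h := Finset.single_le_sum (f := fun j => ‖x j‖ ^ 2)
    (fun j _ => by positivity) (Finset.mem_univ i)
  simpa [Real.norm_eq_abs, sq_abs] using h

lemma s9coord_sub_le (x y : E2) (i : Fin 2) : |x i - y i| ≤ ‖x - y‖ := by
  have h := s9abs_apply_le_norm (x - y) i
  simpa using h

lemma s9dist_mk_le (a b c d : ℝ) : dist (s9mk a b) (s9mk c d) ≤ |a - c| + |b - d| := by
  rw [dist_eq_norm]
  have h : s9mk a b - s9mk c d = (a - c) • s9eb 0 + (b - d) • s9eb 1 := by
    rw [s9mk_eq a b, s9mk_eq c d]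
    module
  rw [h]
  calc ‖(a - c) • s9eb 0 + (b - d) • s9eb 1‖
      ≤ ‖(a - c) • s9eb 0‖ + ‖(b - d) • s9eb 1‖ := norm_add_le _ _
    _ ≤ |a - c| + |b - d| := by
        simp [norm_smul, s9eb, EuclideanSpace.norm_single]

def s9Rect (a₁ b₁ a₂ b₂ : ℝ) : Set E2 := {x | x 0 ∈ Ioo a₁ b₁ ∧ x 1 ∈ Ioo a₂ b₂}

lemma s9isOpen_rect {a₁ b₁ a₂ b₂ : ℝ} : IsOpen (s9Rect a₁ b₁ a₂ b₂) := by
  have h : s9Rect a₁ b₁ a₂ b₂ =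
      (s9pr 0) ⁻¹' Ioo a₁ b₁ ∩ (s9pr 1) ⁻¹' Ioo a₂ b₂ := rfl
  rw [h]
  exact (isOpen_Ioo.preimage (s9pr 0).continuous).inter
    (isOpen_Ioo.preimage (s9pr 1).continuous)

lemma s9mk_mem_rect {a₁ b₁ a₂ b₂ s t : ℝ} (hs : s ∈ Ioo a₁ b₁) (ht : t ∈ Ioo a₂ b₂) :
    s9mk s t ∈ s9Rect a₁ b₁ a₂ b₂ := ⟨hs, ht⟩

@[simp] lemma s9pr_apply (i : Fin 2) (x : E2) : s9pr i x = x i := rfl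

theorem s9hasFDerivAt_K {O : Set E2} (hO : IsOpen O) {g : E2 → ℝ} (hg : ContinuousOn g O)
    {z : E2} (hz : z ∈ O) :
    HasFDerivAt (fun x : E2 => ∫ s in (z 1)..(x 1), g (s9mk (x 0) s))
      ((g z) • (s9pr 1)) z := by
  refine HasFDerivAt.of_isLittleO (Asymptotics.isLittleO_iff.2 ?_)
  intro c hc
  obtain ⟨δ₁, hδ₁pos, hδ₁⟩ := Metric.continuousAt_iff.1 (hg.continuousAt (hO.mem_nhds hz)) c hc
  obtain ⟨δ₂, hδ₂pos, hδ₂⟩ := Metric.isOpen_iff.1 hO z hz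
  have hδpos : 0 < min δ₁ δ₂ := lt_min hδ₁pos hδ₂pos
  have hball : ∀ y ∈ ball z (min δ₁ δ₂), y ∈ O ∧ |g y - g z| ≤ c := by
    intro y hy
    rw [mem_ball] at hy
    refine ⟨hδ₂ (mem_ball.2 (lt_of_lt_of_le hy (min_le_right _ _))), ?_⟩
    have h := hδ₁ (lt_of_lt_of_le hy (min_le_left _ _))
    rw [Real.dist_eq] at h
    exact h.le
  rw [Metric.eventually_nhds_iff]
  refine ⟨min δ₁ δ₂ / 3, by positivity, ?_⟩
  intro x hx
  rw [dist_eq_norm] at hx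
  have hseg : ∀ s ∈ uIcc (z 1) (x 1), s9mk (x 0) s ∈ ball z (min δ₁ δ₂) := by
    intro s hs
    rw [mem_ball]
    have h1 : dist (s9mk (x 0) s) z ≤ |x 0 - z 0| + |s - z 1| := by
      conv_lhs => rw [← s9mk_coords z]
      exact s9dist_mk_le _ _ _ _
    have h2 : |s - z 1| ≤ |x 1 - z 1| := abs_sub_left_of_mem_uIcc hs
    have h3 : |x 0 - z 0| ≤ ‖x - z‖ := s9coord_sub_le x z 0
    have h4 : |x 1 - z 1| ≤ ‖x - z‖ := s9coord_sub_le x z 1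
    calc dist (s9mk (x 0) s) z ≤ |x 0 - z 0| + |s - z 1| := h1
      _ ≤ ‖x - z‖ + ‖x - z‖ := add_le_add h3 (h2.trans h4)
      _ < min δ₁ δ₂ / 3 + min δ₁ δ₂ / 3 := add_lt_add hx hx
      _ ≤ min δ₁ δ₂ := by linarith
  have hcont_seg : ContinuousOn (fun s => g (s9mk (x 0) s)) (uIcc (z 1) (x 1)) :=
    hg.comp (s9cont_mk_left (x 0)).continuousOn (fun s hs => (hball _ (hseg s hs)).1)
  have hint : IntervalIntegrable (fun s => g (s9mk (x 0) s)) volume (z 1) (x 1) :=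
    hcont_seg.intervalIntegrable
  have hcalc : (∫ s in (z 1)..(x 1), g (s9mk (x 0) s))
        - (∫ s in (z 1)..(z 1), g (s9mk (z 0) s)) - ((g z) • (s9pr 1)) (x - z)
      = ∫ s in (z 1)..(x 1), (g (s9mk (x 0) s) - g z) := by
    rw [intervalIntegral.integral_sub hint intervalIntegrable_const,
      intervalIntegral.integral_const, intervalIntegral.integral_same]
    simp [smul_eq_mul]
    ring
  rw [hcalc]
  have hbd : ∀ s ∈ Set.uIoc (z 1) (x 1), ‖g (s9mk (x 0) s) - g z‖ ≤ c := by
    intro s hs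
    rw [Real.norm_eq_abs]
    exact (hball _ (hseg s (uIoc_subset_uIcc hs))).2
  calc ‖∫ s in (z 1)..(x 1), (g (s9mk (x 0) s) - g z)‖
      ≤ c * |x 1 - z 1| := intervalIntegral.norm_integral_le_of_norm_le_const hbd
    _ ≤ c * ‖x - z‖ := mul_le_mul_of_nonneg_left (s9coord_sub_le x z 1) hc.le

theorem s9hasFDerivAt_C {a₁ b₁ a₂ b₂ : ℝ} {q r : ℝ} (hq : q ∈ Ioo a₂ b₂) (hr : r ∈ Ioo a₂ b₂)
    {g : E2 → ℝ} (hg : ContDiffOn ℝ 1 g (s9Rect a₁ b₁ a₂ b₂))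
    {z : E2} (hz : z ∈ s9Rect a₁ b₁ a₂ b₂) :
    HasFDerivAt (fun x : E2 => ∫ s in q..r, g (s9mk (x 0) s))
      ((∫ s in q..r, fderiv ℝ g (s9mk (z 0) s) (s9eb 0)) • (s9pr 0)) z := by
  have hOopen : IsOpen (s9Rect a₁ b₁ a₂ b₂) := s9isOpen_rect
  obtain ⟨hz0, hz1⟩ := hz
  set ε := min (z 0 - a₁) (b₁ - z 0) / 2 with hε_def
  have hε : 0 < ε := by
    have := hz0.1; have := hz0.2
    simp only [hε_def]
    have h1 : 0 < min (z 0 - a₁) (b₁ - z 0) := lt_min (by linarith) (by linarith)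
    linarith
  have hIcc_sub : Icc (z 0 - ε) (z 0 + ε) ⊆ Ioo a₁ b₁ := by
    intro u hu
    have h1 : min (z 0 - a₁) (b₁ - z 0) ≤ z 0 - a₁ := min_le_left _ _
    have h2 : min (z 0 - a₁) (b₁ - z 0) ≤ b₁ - z 0 := min_le_right _ _
    obtain ⟨hu1, hu2⟩ := hu
    constructor <;> [skip; skip] <;> simp only [hε_def] at * <;> nlinarith [hε]
  have huIcc_sub : uIcc q r ⊆ Ioo a₂ b₂ := by
    intro s hs
    obtain ⟨hs1, hs2⟩ := hs
    exact ⟨lt_of_lt_of_le (lt_min hq.1 hr.1) hs1, lt_of_le_of_lt hs2 (max_lt hq.2 hr.2)⟩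
  have hmemx : ∀ x ∈ ball z ε, x 0 ∈ Icc (z 0 - ε) (z 0 + ε) := by
    intro x hx
    rw [mem_ball, dist_eq_norm] at hx
    have h := (s9coord_sub_le x z 0).trans_lt hx
    rw [abs_sub_lt_iff] at h
    exact ⟨by linarith [h.1, h.2], by linarith [h.1, h.2]⟩
  set K : Set E2 := (fun p : ℝ × ℝ => s9mk p.1 p.2) '' (Icc (z 0 - ε) (z 0 + ε) ×ˢ uIcc q r)
    with hK_def
  have hK : IsCompact K := (isCompact_Icc.prod isCompact_uIcc).image s9cont_mk
  have hKO : K ⊆ s9Rect a₁ b₁ a₂ b₂ := by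
    rintro _ ⟨p, ⟨hp1, hp2⟩, rfl⟩
    exact s9mk_mem_rect (hIcc_sub hp1) (huIcc_sub hp2)
  have hmemK : ∀ x ∈ ball z ε, ∀ t ∈ uIcc q r, s9mk (x 0) t ∈ K := by
    intro x hx t ht
    exact ⟨(x 0, t), ⟨hmemx x hx, ht⟩, rfl⟩
  have hfderiv_cont : ContinuousOn (fderiv ℝ g) (s9Rect a₁ b₁ a₂ b₂) :=
    hg.continuousOn_fderiv_of_isOpen hOopen le_rfl
  obtain ⟨M, hM⟩ := hK.exists_bound_of_continuousOn (hfderiv_cont.mono hKO)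
  set em : E2 →L[ℝ] E2 := (s9pr 0).smulRight (s9eb 0) with hem_def
  have hem : ∀ (t : ℝ) (x : E2), HasFDerivAt (fun x : E2 => s9mk (x 0) t) em x := by
    intro t x
    have hfun : (fun x : E2 => s9mk (x 0) t) = fun x => (s9pr 0 x) • s9eb 0 + s9mk 0 t := by
      funext y
      ext i
      fin_cases i <;> simp [s9mk, s9eb, EuclideanSpace.single_apply]
    rw [hfun]
    exact ((s9pr 0).hasFDerivAt.smul_const (s9eb 0)).add_const (s9mk 0 t)
  have hmapsto : ∀ u ∈ Ioo a₁ b₁, MapsTo (fun s => s9mk u s) (uIcc q r) (s9Rect a₁ b₁ a₂ b₂) :=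
    fun u hu s hs => s9mk_mem_rect hu (huIcc_sub hs)
  have hcontF : ∀ u ∈ Ioo a₁ b₁, ContinuousOn (fun t => g (s9mk u t)) (uIcc q r) :=
    fun u hu => hg.continuousOn.comp (s9cont_mk_left u).continuousOn (hmapsto u hu)
  have hcontF' : ContinuousOn (fun t => (fderiv ℝ g (s9mk (z 0) t)).comp em) (uIcc q r) :=
    (hfderiv_cont.comp (s9cont_mk_left (z 0)).continuousOn (hmapsto _ hz0)).clm_comp
      continuousOn_const
  have key := intervalIntegral.hasFDerivAt_integral_of_dominated_of_fderiv_le (μ := volume)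
    (F := fun (x : E2) t => g (s9mk (x 0) t))
    (F' := fun (x : E2) t => (fderiv ℝ g (s9mk (x 0) t)).comp em)
    (x₀ := z) (a := q) (b := r) (bound := fun _ => M * ‖em‖) (s := ball z ε) (ball_mem_nhds z hε)
    ?_ ?_ ?_ ?_ ?_ ?_
  · have hopint : IntervalIntegrable (fun t => (fderiv ℝ g (s9mk (z 0) t)).comp em) volume q r :=
      hcontF'.intervalIntegrable
    have hop : (∫ t in q..r, (fderiv ℝ g (s9mk (z 0) t)).comp em)
        = (∫ s in q..r, fderiv ℝ g (s9mk (z 0) s) (s9eb 0)) • s9pr 0 := by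
      ext h
      rw [ContinuousLinearMap.intervalIntegral_apply hopint]
      simp only [ContinuousLinearMap.coe_comp', Function.comp_apply,
        ContinuousLinearMap.smulRight_apply, s9pr_apply, hem_def]
      simp only [_root_.map_smul]
      rw [intervalIntegral.integral_smul]
      simp only [ContinuousLinearMap.smul_apply, s9pr_apply, smul_eq_mul]
      ring
    rw [← hop]
    exact key
  · filter_upwards [ball_mem_nhds z hε] with x hx
    exact ((hcontF _ (hIcc_sub (hmemx x hx))).mono uIoc_subset_uIcc).aestronglyMeasurable
      measurableSet_uIoc
  · exact (hcontF _ hz0).intervalIntegrable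
  · exact (hcontF'.mono uIoc_subset_uIcc).aestronglyMeasurable measurableSet_uIoc
  · refine Eventually.of_forall fun t ht x hx => ?_
    calc ‖(fderiv ℝ g (s9mk (x 0) t)).comp em‖
        ≤ ‖fderiv ℝ g (s9mk (x 0) t)‖ * ‖em‖ := ContinuousLinearMap.opNorm_comp_le _ _
      _ ≤ M * ‖em‖ := by
          refine mul_le_mul_of_nonneg_right ?_ (norm_nonneg em)
          exact hM _ (hmemK x hx t (uIoc_subset_uIcc ht))
  · exact intervalIntegrable_const
  · refine Eventually.of_forall fun t ht x hx => ?_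
    have hy : s9mk (x 0) t ∈ s9Rect a₁ b₁ a₂ b₂ := hKO (hmemK x hx t (uIoc_subset_uIcc ht))
    have hdg : HasFDerivAt g (fderiv ℝ g (s9mk (x 0) t)) (s9mk (x 0) t) :=
      ((hg.differentiableOn one_ne_zero).differentiableAt (hOopen.mem_nhds hy)).hasFDerivAt
    exact hdg.comp x (hem t x)

lemma s9uIcc_sub {a b q r : ℝ} (hq : q ∈ Ioo a b) (hr : r ∈ Ioo a b) : uIcc q r ⊆ Ioo a b :=
  fun s hs => ⟨lt_of_lt_of_le (lt_min hq.1 hr.1) hs.1, lt_of_le_of_lt hs.2 (max_lt hq.2 hr.2)⟩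

theorem s9key {a₁ b₁ a₂ b₂ : ℝ} (P : E2) (hP : P ∈ s9Rect a₁ b₁ a₂ b₂)
    (v : E2 → E2) (hv : ContDiffOn ℝ 1 v (s9Rect a₁ b₁ a₂ b₂))
    (hcurl : ∀ x ∈ s9Rect a₁ b₁ a₂ b₂,
      fderiv ℝ (fun y => v y 1) x (s9eb 0) = fderiv ℝ (fun y => v y 0) x (s9eb 1)) :
    ∃ φ : E2 → ℝ, φ P = 0 ∧ ∀ z ∈ s9Rect a₁ b₁ a₂ b₂, HasGradientAt φ (v z) z := by
  have hOopen : IsOpen (s9Rect a₁ b₁ a₂ b₂) := s9isOpen_rect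
  obtain ⟨hP0, hP1⟩ := hP
  refine ⟨fun x => (∫ t in (P 0)..(x 0), v (s9mk t (P 1)) 0)
      + ∫ s in (P 1)..(x 1), v (s9mk (x 0) s) 1, by simp, ?_⟩
  intro z hz
  obtain ⟨hz0, hz1⟩ := hz
  have hfc : ContDiffOn ℝ 1 (fun y => v y 0) (s9Rect a₁ b₁ a₂ b₂) :=
    (s9pr 0).contDiff.comp_contDiffOn hv
  have hgc : ContDiffOn ℝ 1 (fun y => v y 1) (s9Rect a₁ b₁ a₂ b₂) :=
    (s9pr 1).contDiff.comp_contDiffOn hv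
  -- A part
  have hcA : ContinuousOn (fun t => v (s9mk t (P 1)) 0) (Ioo a₁ b₁) :=
    hfc.continuousOn.comp (s9cont_mk_right (P 1)).continuousOn
      (fun u hu => s9mk_mem_rect hu hP1)
  have hderivA : HasDerivAt (fun u => ∫ t in (P 0)..u, v (s9mk t (P 1)) 0)
      (v (s9mk (z 0) (P 1)) 0) (z 0) := by
    refine intervalIntegral.integral_hasDerivAt_right ?_ ?_ ?_
    · exact (hcA.mono (s9uIcc_sub hP0 hz0)).intervalIntegrable
    · exact hcA.stronglyMeasurableAtFilter isOpen_Ioo _ hz0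
    · exact hcA.continuousAt (isOpen_Ioo.mem_nhds hz0)
  have hA : HasFDerivAt (fun x : E2 => ∫ t in (P 0)..(x 0), v (s9mk t (P 1)) 0)
      ((v (s9mk (z 0) (P 1)) 0) • s9pr 0) z :=
    by have := hderivA.comp_hasFDerivAt z (s9pr 0).hasFDerivAt; exact this
  -- C part
  have hC := s9hasFDerivAt_C (q := P 1) (r := z 1) hP1 hz1 (g := fun y => v y 1) hgc
    (z := z) ⟨hz0, hz1⟩
  -- K part
  have hK := s9hasFDerivAt_K hOopen (g := fun y => v y 1) hgc.continuousOn (z := z) ⟨hz0, hz1⟩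
  -- eventual equality
  have heq : (fun x : E2 => ∫ s in (P 1)..(x 1), v (s9mk (x 0) s) 1)
      =ᶠ[𝓝 z] fun x => (∫ s in (P 1)..(z 1), v (s9mk (x 0) s) 1)
        + ∫ s in (z 1)..(x 1), v (s9mk (x 0) s) 1 := by
    filter_upwards [hOopen.mem_nhds ⟨hz0, hz1⟩] with x hx
    obtain ⟨hx0, hx1⟩ := hx
    have hcont : ∀ {c d : ℝ}, c ∈ Ioo a₂ b₂ → d ∈ Ioo a₂ b₂ →
        IntervalIntegrable (fun s => v (s9mk (x 0) s) 1) volume c d := by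
      intro c d hc hd
      refine ContinuousOn.intervalIntegrable ?_
      exact hgc.continuousOn.comp (s9cont_mk_left (x 0)).continuousOn
        (fun s hs => s9mk_mem_rect hx0 (s9uIcc_sub hc hd hs))
    rw [← intervalIntegral.integral_add_adjacent_intervals (hcont hP1 hz1) (hcont hz1 hx1)]
  have hB : HasFDerivAt (fun x : E2 => ∫ s in (P 1)..(x 1), v (s9mk (x 0) s) 1)
      (((∫ s in (P 1)..(z 1), fderiv ℝ (fun y => v y 1) (s9mk (z 0) s) (s9eb 0)) • s9pr 0)
        + ((v z 1) • s9pr 1)) z :=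
    (hC.add hK).congr_of_eventuallyEq heq
  have hφ' := hA.add hB
  -- FTC-2 along the vertical segment
  have hpath : ∀ s : ℝ, HasDerivAt (fun s => s9mk (z 0) s) (s9eb 1) s := by
    intro s
    have hfun : (fun s : ℝ => s9mk (z 0) s) = fun s => s9mk (z 0) 0 + s • s9eb 1 := by
      funext u; ext i; fin_cases i <;> simp [s9mk, s9eb, EuclideanSpace.single_apply]
    rw [hfun]
    simpa using ((hasDerivAt_id s).smul_const (s9eb 1)).const_add (s9mk (z 0) 0)
  have hdf : ∀ s ∈ uIcc (P 1) (z 1), HasDerivAt (fun s => v (s9mk (z 0) s) 0)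
      (fderiv ℝ (fun y => v y 0) (s9mk (z 0) s) (s9eb 1)) s := by
    intro s hs
    have hy : s9mk (z 0) s ∈ s9Rect a₁ b₁ a₂ b₂ :=
      s9mk_mem_rect hz0 (s9uIcc_sub hP1 hz1 hs)
    have hdf' : HasFDerivAt (fun y => v y 0)
        (fderiv ℝ (fun y => v y 0) (s9mk (z 0) s)) (s9mk (z 0) s) :=
      ((hfc.differentiableOn one_ne_zero).differentiableAt (hOopen.mem_nhds hy)).hasFDerivAt
    exact hdf'.comp_hasDerivAt s (hpath s)
  have hder_cont : ContinuousOn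
      (fun s => fderiv ℝ (fun y => v y 0) (s9mk (z 0) s) (s9eb 1)) (uIcc (P 1) (z 1)) :=
    ((hfc.continuousOn_fderiv_of_isOpen hOopen le_rfl).comp
      (s9cont_mk_left (z 0)).continuousOn
      (fun s hs => s9mk_mem_rect hz0 (s9uIcc_sub hP1 hz1 hs))).clm_apply continuousOn_const
  have hFTC : (∫ s in (P 1)..(z 1), fderiv ℝ (fun y => v y 0) (s9mk (z 0) s) (s9eb 1))
      = v (s9mk (z 0) (z 1)) 0 - v (s9mk (z 0) (P 1)) 0 :=
    intervalIntegral.integral_eq_sub_of_hasDerivAt hdf hder_cont.intervalIntegrable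
  have hcongr : (∫ s in (P 1)..(z 1), fderiv ℝ (fun y => v y 1) (s9mk (z 0) s) (s9eb 0))
      = ∫ s in (P 1)..(z 1), fderiv ℝ (fun y => v y 0) (s9mk (z 0) s) (s9eb 1) :=
    intervalIntegral.integral_congr fun s hs =>
      hcurl _ (s9mk_mem_rect hz0 (s9uIcc_sub hP1 hz1 hs))
  rw [hasGradientAt_iff_hasFDerivAt]
  have hopeq : ((v (s9mk (z 0) (P 1)) 0) • s9pr 0)
      + ((((∫ s in (P 1)..(z 1), fderiv ℝ (fun y => v y 1) (s9mk (z 0) s) (s9eb 0)) • s9pr 0)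
        + ((v z 1) • s9pr 1))) = (InnerProductSpace.toDual ℝ E2) (v z) := by
    rw [hcongr, hFTC]
    ext h
    simp only [ContinuousLinearMap.add_apply, ContinuousLinearMap.smul_apply, s9pr_apply,
      smul_eq_mul, InnerProductSpace.toDual_apply_apply, PiLp.inner_apply, RCLike.inner_apply,
      conj_trivial, Fin.sum_univ_two, s9mk_coords]
    ring
  exact hopeq ▸ hφ'

theorem s9smooth {O : Set E2} (hO : IsOpen O) {v : E2 → E2} {φ : E2 → ℝ}
    (hv : ContinuousOn v O) (hgrad : ∀ x ∈ O, HasGradientAt φ (v x) x) :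
    ContDiffOn ℝ 1 φ O := by
  rw [show (1 : WithTop ℕ∞) = 0 + 1 by norm_num, contDiffOn_succ_iff_fderiv_of_isOpen hO]
  refine ⟨fun x hx => ((hgrad x hx).differentiableAt).differentiableWithinAt, ?_, ?_⟩
  · intro h; simp at h
  · rw [contDiffOn_zero]
    refine ContinuousOn.congr (f := fun x => (InnerProductSpace.toDual ℝ E2) (v x)) ?_ ?_
    · exact (InnerProductSpace.toDual ℝ E2).continuous.comp_continuousOn hv
    · exact fun x hx => (hasGradientAt_iff_hasFDerivAt.1 (hgrad x hx)).fderiv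

theorem s9curve {O : Set E2} {v : E2 → E2} {φ : E2 → ℝ} {P x : E2}
    (hgrad : ∀ y ∈ O, HasGradientAt φ (v y) y) (hP0 : φ P = 0) {γ : ℝ → E2}
    (hγ : IsCurveIn O P x γ)
    (hint : IntervalIntegrable (fun t => dot (v (γ t)) (deriv γ t)) volume 0 1) :
    φ x = ∫ t in (0:ℝ)..1, dot (v (γ t)) (deriv γ t) := by
  obtain ⟨⟨hcont, S, hS⟩, hmem, h0, h1⟩ := hγ
  have hφcont : ContinuousOn φ O := fun y hy =>
    ((hgrad y hy).differentiableAt.continuousAt).continuousWithinAt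
  have key := MeasureTheory.integral_eq_of_hasDerivAt_off_countable
    (f := fun t => φ (γ t)) (f' := fun t => dot (v (γ t)) (deriv γ t)) (a := 0) (b := 1)
    (s := (S : Set ℝ)) S.countable_toSet ?_ ?_ hint
  · rw [key]; simp only [h0, h1, hP0, sub_zero]
  · rw [Set.uIcc_of_le (by norm_num : (0:ℝ) ≤ 1)]
    exact hφcont.comp hcont hmem
  · rintro t ⟨ht, htS⟩
    rw [show min (0:ℝ) 1 = 0 by norm_num, show max (0:ℝ) 1 = 1 by norm_num] at ht
    have htIcc : t ∈ Set.Icc (0:ℝ) 1 := ⟨ht.1.le, ht.2.le⟩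
    have hdiff : DifferentiableAt ℝ γ t := hS t htIcc (by simpa using htS)
    have hgrd := hasGradientAt_iff_hasFDerivAt.1 (hgrad (γ t) (hmem t htIcc))
    have hcomp := hgrd.comp_hasDerivAt t hdiff.hasDerivAt
    simpa [dot, InnerProductSpace.toDual_apply_apply, Function.comp_def] using hcomp

/-- Poincaré's lemma on a rectangle, with explicit line-integral potentials:
for irrotational `v`, `φ(x) = ∫_{Γ_x} v₁ dx₁ + v₂ dx₂` is well defined (curve
independent) and `∇φ = v`; for solenoidal `v`, `ψ(x) = ∫_{Γ_x} v₁ dx₂ − v₂ dx₁`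
is well defined and `∇^⊥ψ = v`. -/
theorem stmt9 (a₁ b₁ a₂ b₂ : ℝ) (h1 : a₁ < b₁) (h2 : a₂ < b₂)
    (O : Set E2) (hO : O = {x : E2 | x 0 ∈ Set.Ioo a₁ b₁ ∧ x 1 ∈ Set.Ioo a₂ b₂})
    (P : E2) (hP : P ∈ O) (v : E2 → E2) (hv : ContDiffOn ℝ 1 v O) :
    ((∀ x ∈ O, fderiv ℝ (fun y => v y 1) x (EuclideanSpace.single 0 1)
        = fderiv ℝ (fun y => v y 0) x (EuclideanSpace.single 1 1)) →
      ∃ φ : E2 → ℝ, ContDiffOn ℝ 1 φ O ∧ (∀ x ∈ O, HasGradientAt φ (v x) x) ∧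
        ∀ x ∈ O, ∀ γ : ℝ → E2, IsCurveIn O P x γ →
          IntervalIntegrable (fun t => dot (v (γ t)) (deriv γ t)) volume 0 1 →
          φ x = ∫ t in (0:ℝ)..1, dot (v (γ t)) (deriv γ t)) ∧
    ((∀ x ∈ O, fderiv ℝ (fun y => v y 0) x (EuclideanSpace.single 0 1)
        + fderiv ℝ (fun y => v y 1) x (EuclideanSpace.single 1 1) = 0) →
      ∃ ψ : E2 → ℝ, ContDiffOn ℝ 1 ψ O ∧
        (∀ x ∈ O, ∃ gx : E2, HasGradientAt ψ gx x ∧ perp gx = v x) ∧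
        ∀ x ∈ O, ∀ γ : ℝ → E2, IsCurveIn O P x γ →
          IntervalIntegrable (fun t => dot (v (γ t)) (perp (deriv γ t))) volume 0 1 →
          ψ x = ∫ t in (0:ℝ)..1, dot (v (γ t)) (perp (deriv γ t))) := by
  subst hO
  constructor
  · intro hirr
    obtain ⟨φ, hφP, hφgrad⟩ := s9key P hP v hv hirr
    refine ⟨φ, s9smooth s9isOpen_rect hv.continuousOn hφgrad, hφgrad, ?_⟩
    intro x hx γ hγ hint
    exact s9curve hφgrad hφP hγ hint
  · intro hsol
    set w : E2 → E2 := fun y => s9mk (-(v y 1)) (v y 0) with hw_def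
    have hw : ContDiffOn ℝ 1 w {x : E2 | x 0 ∈ Set.Ioo a₁ b₁ ∧ x 1 ∈ Set.Ioo a₂ b₂} := by
      have hwe : w = fun y => (-(v y 1)) • s9eb 0 + (v y 0) • s9eb 1 := by
        funext y; rw [hw_def]; exact s9mk_eq _ _
      rw [hwe]
      exact ((((s9pr 1).contDiff.comp_contDiffOn hv).neg).smul contDiffOn_const).add
        (((s9pr 0).contDiff.comp_contDiffOn hv).smul contDiffOn_const)
    have hw1 : (fun y => w y 1) = fun y => v y 0 := by funext y; simp [hw_def]
    have hw0 : (fun y => w y 0) = fun y => -(v y 1) := by funext y; simp [hw_def]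
    have hwcurl : ∀ x ∈ s9Rect a₁ b₁ a₂ b₂,
        fderiv ℝ (fun y => w y 1) x (s9eb 0) = fderiv ℝ (fun y => w y 0) x (s9eb 1) := by
      intro x hx
      rw [hw1, hw0, fderiv_fun_neg]
      have hs := hsol x hx
      simp only [ContinuousLinearMap.neg_apply, s9eb]
      linarith
    obtain ⟨ψ, hψP, hψgrad⟩ := s9key P hP w hw hwcurl
    refine ⟨ψ, s9smooth s9isOpen_rect hw.continuousOn hψgrad, ?_, ?_⟩
    · intro x hx
      refine ⟨w x, hψgrad x hx, ?_⟩
      ext i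
      fin_cases i <;>
        simp [perp, hw_def, s9mk, Matrix.cons_val_zero, Matrix.cons_val_one, Matrix.head_cons]
    · intro x hx γ hγ hint
      have hfun : (fun t => dot (w (γ t)) (deriv γ t))
          = fun t => dot (v (γ t)) (perp (deriv γ t)) := by
        funext t
        simp only [dot, hw_def, perp, PiLp.inner_apply, RCLike.inner_apply, conj_trivial,
          Fin.sum_univ_two, s9mk_zero, s9mk_one, Matrix.cons_val_zero, Matrix.cons_val_one,
          Matrix.head_cons]
        ring
      have hres := s9curve hψgrad hψP hγ (by rw [hfun]; exact hint)
      rw [hres, hfun]
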